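/- arXiv:1611.07573 — 3 statements merged into one kernel-verified Lean document; each statement's English description precedes it below -/
import Mathlib

section
/- Let T be a finite undirected tree with edge cost M : E → ℝ≥0 and ρ > 0. For a root r, define tEMD^ρ_r(p,q) = Σ_{v ≠ r} M(v, parent(v)) · |φ_r(v)|^ρ, where φ_r is the flow in the tree rooted at r. If n₀ and n₁ are adjacent vertices and Σ_v p(v) = Σ_v q(v), then tEMD^ρ_{n₀}(p,q) = tEMD^ρ_{n₁}(p,q). -/
open SimpleGraph Finset

variable {V : Type} [Fintype V] [DecidableEq V]

/-- Rooting a tree at `r`: the parent of `v` is the second vertex on the unique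
path from `v` to `r` (and `r` itself when `v = r`). -/
noncomputable def treeParent (G : SimpleGraph V) (hG : G.IsTree) (r v : V) : V :=
  (hG.existsUnique_path v r).choose.getVert 1

/-- The children of `v` in the tree rooted at `r`. -/
noncomputable def treeChildren (G : SimpleGraph V) (hG : G.IsTree) (r v : V) : Finset V :=
  Finset.univ.filter fun c => c ≠ r ∧ treeParent G hG r c = v

/-- `φ` is the flow for `p, q` in the tree rooted at `r` if it satisfies the recursion
`φ v = p v − q v + Σ_{c child of v} φ c`. -/
def IsFlow (G : SimpleGraph V) (hG : G.IsTree) (r : V) (p q φ : V → ℝ) : Prop :=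
  ∀ v, φ v = p v - q v + ∑ c ∈ treeChildren G hG r v, φ c

/-- The tree earth mover's distance for the rooting at `r`, edge costs `M`,
exponent `ρ`, and flow `φ`. -/
noncomputable def tEMD (G : SimpleGraph V) (hG : G.IsTree) (M : V → V → ℝ) (ρ : ℝ)
    (r : V) (φ : V → ℝ) : ℝ :=
  ∑ v ∈ Finset.univ.erase r, M v (treeParent G hG r v) * |φ v| ^ ρ

/-! ### Auxiliary machinery -/

/-- The unique path from `u` to `r` in the tree. -/
noncomputable def pth (G : SimpleGraph V) (hG : G.IsTree) (u r : V) : G.Walk u r :=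
  (hG.existsUnique_path u r).choose

variable {G : SimpleGraph V} {hG : G.IsTree}

lemma pth_isPath (u r : V) : (pth G hG u r).IsPath :=
  (hG.existsUnique_path u r).choose_spec.1

lemma pth_unique {u r : V} (w : G.Walk u r) (hw : w.IsPath) : w = pth G hG u r :=
  (hG.existsUnique_path u r).choose_spec.2 w hw

lemma treeParent_eq (r v : V) : treeParent G hG r v = (pth G hG v r).getVert 1 := rfl

lemma pth_nil (r : V) : pth G hG r r = Walk.nil :=
  (pth_unique Walk.nil Walk.IsPath.nil).symm

lemma pth_reverse (u v : V) : (pth G hG u v).reverse = pth G hG v u :=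
  pth_unique _ (pth_isPath u v).reverse

lemma pth_cons {v r : V} (h : v ≠ r) :
    ∃ h' : G.Adj v (treeParent G hG r v),
      pth G hG v r = Walk.cons h' (pth G hG (treeParent G hG r v) r) := by
  obtain ⟨w, hadj, p', hp⟩ := Walk.exists_eq_cons_of_ne h (pth G hG v r)
  have hpath : (Walk.cons hadj p').IsPath := by rw [← hp]; exact pth_isPath v r
  have hp' : p'.IsPath := ((Walk.cons_isPath_iff _ _).1 hpath).1
  have hw : treeParent G hG r v = w := by
    rw [treeParent_eq, hp, Walk.getVert_cons_succ, Walk.getVert_zero]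
  subst hw
  exact ⟨hadj, by rw [hp, pth_unique p' hp']⟩

lemma pth_split {u r v : V} (h : v ∈ (pth G hG u r).support) :
    pth G hG u r = (pth G hG u v).append (pth G hG v r) := by
  have hs := ((pth G hG u r).take_spec h).symm
  have h1 : (pth G hG u r).takeUntil v h = pth G hG u v :=
    pth_unique _ ((pth_isPath u r).takeUntil h)
  have h2 : (pth G hG u r).dropUntil v h = pth G hG v r :=
    pth_unique _ ((pth_isPath u r).dropUntil h)
  rw [hs, h1, h2]

/-- The subtree of `v` when the tree is rooted at `r`. -/
noncomputable def subtree (G : SimpleGraph V) (hG : G.IsTree) (r v : V) : Finset V :=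
  Finset.univ.filter fun u => v ∈ (pth G hG u r).support

lemma mem_subtree {r v u : V} : u ∈ subtree G hG r v ↔ v ∈ (pth G hG u r).support := by
  simp [subtree]

lemma self_mem_subtree (r v : V) : v ∈ subtree G hG r v :=
  mem_subtree.2 (Walk.start_mem_support _)

lemma child_char {r v c u : V} (hc : c ∈ treeChildren G hG r v) (hu : u ∈ subtree G hG r c) :
    u ∈ subtree G hG r v ∧ u ≠ v ∧ (pth G hG v u).getVert 1 = c := by
  rw [treeChildren, Finset.mem_filter] at hc
  obtain ⟨-, hcr, hpc⟩ := hc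
  have hco' : ∃ h' : G.Adj c v, pth G hG c r = Walk.cons h' (pth G hG v r) := by
    subst hpc
    exact pth_cons (hG := hG) hcr
  obtain ⟨h', hco⟩ := hco'
  have hsplit : pth G hG u r = (pth G hG u c).append (Walk.cons h' (pth G hG v r)) := by
    rw [pth_split (mem_subtree.1 hu), hco]
  have hmemv : u ∈ subtree G hG r v := by
    rw [mem_subtree, hsplit, Walk.mem_support_append_iff]
    exact Or.inr (by simp)
  have hune : u ≠ v := by
    rintro rfl
    have : c ∈ (pth G hG u r).support := mem_subtree.1 hu
    have hpath := pth_isPath (hG := hG) c r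
    rw [hco, Walk.cons_isPath_iff] at hpath
    exact hpath.2 this
  refine ⟨hmemv, hune, ?_⟩
  have hsplit2 : pth G hG u r = ((pth G hG u c).concat h').append (pth G hG v r) := by
    rw [hsplit, Walk.concat_append]
  have hpref : ((pth G hG u c).concat h').IsPath := by
    have := pth_isPath (hG := hG) u r
    rw [hsplit2] at this
    exact this.of_append_left
  have huv : (pth G hG u c).concat h' = pth G hG u v := pth_unique _ hpref
  have hvu : pth G hG v u = Walk.cons h'.symm (pth G hG u c).reverse := by
    rw [← pth_reverse, ← huv, Walk.reverse_concat]
  rw [hvu, Walk.getVert_cons_succ, Walk.getVert_zero]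

lemma subtree_cover {r v u : V} (hu : u ∈ subtree G hG r v) (hne : u ≠ v) :
    ∃ c ∈ treeChildren G hG r v, u ∈ subtree G hG r c := by
  obtain ⟨h', hco⟩ := pth_cons (hG := hG) (Ne.symm hne)
  set c := treeParent G hG u v with hc
  have huv : pth G hG u v = (pth G hG u c).concat h'.symm := by
    rw [← pth_reverse, hco, Walk.reverse_cons, pth_reverse, Walk.concat_eq_append]
  have hsplit : pth G hG u r = (pth G hG u c).append (Walk.cons h'.symm (pth G hG v r)) := by
    rw [pth_split (mem_subtree.1 hu), huv, Walk.concat_append]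
  have hsuf : (Walk.cons h'.symm (pth G hG v r)).IsPath := by
    have := pth_isPath (hG := hG) u r
    rw [hsplit] at this
    exact this.of_append_right
  have hcr : pth G hG c r = Walk.cons h'.symm (pth G hG v r) := (pth_unique _ hsuf).symm
  have hcner : c ≠ r := by
    rintro rfl
    rw [pth_nil] at hcr
    simpa using congrArg Walk.length hcr
  refine ⟨c, ?_, ?_⟩
  · rw [treeChildren, Finset.mem_filter]
    refine ⟨Finset.mem_univ _, hcner, ?_⟩
    rw [treeParent_eq, hcr, Walk.getVert_cons_succ, Walk.getVert_zero]
  · rw [mem_subtree, hsplit, Walk.mem_support_append_iff]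
    exact Or.inl (Walk.end_mem_support _)

lemma subtree_biUnion (r v : V) :
    (subtree G hG r v).erase v = (treeChildren G hG r v).biUnion (fun c => subtree G hG r c) := by
  ext u
  simp only [Finset.mem_erase, Finset.mem_biUnion]
  constructor
  · rintro ⟨hne, hu⟩
    obtain ⟨c, hc, huc⟩ := subtree_cover hu hne
    exact ⟨c, hc, huc⟩
  · rintro ⟨c, hc, huc⟩
    obtain ⟨h1, h2, -⟩ := child_char hc huc
    exact ⟨h2, h1⟩

lemma children_disjoint {r v : V} :
    ∀ c ∈ treeChildren G hG r v, ∀ c' ∈ treeChildren G hG r v, c ≠ c' →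
      Disjoint (subtree G hG r c) (subtree G hG r c') := by
  intro c hc c' hc' hne
  rw [Finset.disjoint_left]
  intro u hu hu'
  obtain ⟨-, -, h1⟩ := child_char hc hu
  obtain ⟨-, -, h2⟩ := child_char hc' hu'
  exact hne (h1.symm.trans h2)

lemma flow_eq {r : V} {p q φ : V → ℝ} (hφ : IsFlow G hG r p q φ) (v : V) :
    φ v = ∑ u ∈ subtree G hG r v, (p u - q u) := by
  have key : ∀ n (v : V), (subtree G hG r v).card ≤ n →
      φ v = ∑ u ∈ subtree G hG r v, (p u - q u) := by
    intro n
    induction n with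
    | zero =>
      intro v hv
      exfalso
      have h1 : 0 < (subtree G hG r v).card :=
        Finset.card_pos.2 ⟨v, self_mem_subtree r v⟩
      omega
    | succ n ih =>
      intro v hv
      have hchild : ∀ c ∈ treeChildren G hG r v, φ c = ∑ u ∈ subtree G hG r c, (p u - q u) := by
        intro c hc
        apply ih
        have hsub : subtree G hG r c ⊆ (subtree G hG r v).erase v := by
          rw [subtree_biUnion]
          exact Finset.subset_biUnion_of_mem _ hc
        have h1 := Finset.card_le_card hsub
        have h2 := Finset.card_erase_lt_of_mem (self_mem_subtree (hG := hG) r v)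
        omega
      rw [hφ v, Finset.sum_congr rfl hchild, ← Finset.sum_biUnion (children_disjoint),
        ← subtree_biUnion, ← Finset.add_sum_erase _ _ (self_mem_subtree r v)]
  exact key _ v le_rfl

/-! ### Comparing two adjacent roots -/

lemma pth_single {a b : V} (h : G.Adj a b) : pth G hG a b = Walk.cons h Walk.nil := by
  refine (pth_unique _ ?_).symm
  rw [Walk.cons_isPath_iff]
  exact ⟨Walk.IsPath.nil, by simp [h.ne]⟩

lemma dichot {n₀ n₁ : V} (hadj : G.Adj n₀ n₁) (u : V) :
    (pth G hG u n₁ = (pth G hG u n₀).concat hadj ∧ n₁ ∉ (pth G hG u n₀).support) ∨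
    (pth G hG u n₀ = (pth G hG u n₁).concat hadj.symm ∧ n₀ ∉ (pth G hG u n₁).support) := by
  by_cases h : n₀ ∈ (pth G hG u n₁).support
  · left
    have heq : pth G hG u n₁ = (pth G hG u n₀).concat hadj := by
      rw [pth_split h, pth_single hadj, Walk.concat_eq_append]
    refine ⟨heq, ?_⟩
    have hpath := pth_isPath (hG := hG) u n₁
    rw [heq, Walk.isPath_def, Walk.support_concat,
      List.nodup_append] at hpath
    intro hmem
    exact hpath.2.2 _ hmem _ (List.mem_singleton_self _) rfl
  · right
    have hpath : ((pth G hG u n₁).concat hadj.symm).IsPath := by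
      rw [← Walk.isPath_reverse_iff, Walk.reverse_concat, Walk.cons_isPath_iff]
      refine ⟨(pth_isPath u n₁).reverse, ?_⟩
      rw [Walk.support_reverse, List.mem_reverse]
      exact h
    exact ⟨(pth_unique _ hpath).symm, h⟩

lemma mem_support_root_swap {n₀ n₁ : V} (hadj : G.Adj n₀ n₁) (u v : V)
    (hv0 : v ≠ n₀) (hv1 : v ≠ n₁) :
    v ∈ (pth G hG u n₀).support ↔ v ∈ (pth G hG u n₁).support := by
  rcases dichot (hG := hG) hadj u with ⟨heq, -⟩ | ⟨heq, -⟩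
  · rw [heq, Walk.support_concat, List.mem_append]
    simp [hv1]
  · rw [heq, Walk.support_concat, List.mem_append]
    simp [hv0]

lemma opp_subtree {n₀ n₁ : V} (hadj : G.Adj n₀ n₁) (u : V) :
    n₁ ∈ (pth G hG u n₀).support ↔ n₀ ∉ (pth G hG u n₁).support := by
  rcases dichot (hG := hG) hadj u with ⟨heq, hn⟩ | ⟨heq, hn⟩
  · have hmem : n₀ ∈ (pth G hG u n₁).support := by
      rw [heq, Walk.support_concat, List.mem_append]
      exact Or.inl (Walk.end_mem_support _)
    simp [hn, hmem]
  · have hmem : n₁ ∈ (pth G hG u n₀).support := by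
      rw [heq, Walk.support_concat, List.mem_append]
      exact Or.inl (Walk.end_mem_support _)
    simp [hn, hmem]

lemma parent_root_swap {n₀ n₁ : V} (hadj : G.Adj n₀ n₁) (v : V)
    (hv0 : v ≠ n₀) (hv1 : v ≠ n₁) :
    treeParent G hG n₀ v = treeParent G hG n₁ v := by
  rcases dichot (hG := hG) hadj v with ⟨heq, -⟩ | ⟨heq, -⟩
  · obtain ⟨h', hco⟩ := pth_cons (hG := hG) hv0
    rw [treeParent_eq n₁ v, heq, hco, Walk.concat_cons, Walk.getVert_cons_succ,
      Walk.getVert_zero]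
  · obtain ⟨h', hco⟩ := pth_cons (hG := hG) hv1
    rw [treeParent_eq n₀ v, heq, hco, Walk.concat_cons, Walk.getVert_cons_succ,
      Walk.getVert_zero]

lemma parent_of_adj {n₀ n₁ : V} (hadj : G.Adj n₀ n₁) : treeParent G hG n₀ n₁ = n₀ := by
  rw [treeParent_eq, pth_single hadj.symm, Walk.getVert_cons_succ, Walk.getVert_zero]

theorem tEMD_adjacent_roots (G : SimpleGraph V) (hG : G.IsTree)
    (M : V → V → ℝ) (hMsymm : ∀ a b, M a b = M b a) (hMnonneg : ∀ a b, 0 ≤ M a b)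
    (ρ : ℝ) (hρ : 0 < ρ)
    (n₀ n₁ : V) (hadj : G.Adj n₀ n₁) (p q : V → ℝ)
    (hmass : ∑ v, p v = ∑ v, q v)
    (φA φB : V → ℝ)
    (hA : IsFlow G hG n₀ p q φA) (hB : IsFlow G hG n₁ p q φB) :
    tEMD G hG M ρ n₀ φA = tEMD G hG M ρ n₁ φB := by
  have hne : n₀ ≠ n₁ := hadj.ne
  have hφA : ∀ v, φA v = ∑ u ∈ subtree G hG n₀ v, (p u - q u) := flow_eq hA
  have hφB : ∀ v, φB v = ∑ u ∈ subtree G hG n₁ v, (p u - q u) := flow_eq hB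
  have hsub_eq : ∀ v, v ≠ n₀ → v ≠ n₁ → subtree G hG n₀ v = subtree G hG n₁ v := by
    intro v hv0 hv1
    ext u
    rw [mem_subtree, mem_subtree, mem_support_root_swap hadj u v hv0 hv1]
  have htot : ∑ u, (p u - q u) = 0 := by
    rw [Finset.sum_sub_distrib, hmass, sub_self]
  have hcompl : subtree G hG n₀ n₁ = Finset.univ \ subtree G hG n₁ n₀ := by
    ext u
    rw [mem_subtree, Finset.mem_sdiff, mem_subtree, opp_subtree hadj u]
    simp
  have hopp : φA n₁ = -φB n₀ := by
    rw [hφA, hφB, hcompl, Finset.sum_sdiff_eq_sub (Finset.subset_univ _), htot, zero_sub]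
  unfold tEMD
  have hmem0 : n₁ ∈ Finset.univ.erase n₀ := Finset.mem_erase.2 ⟨hne.symm, Finset.mem_univ _⟩
  have hmem1 : n₀ ∈ Finset.univ.erase n₁ := Finset.mem_erase.2 ⟨hne, Finset.mem_univ _⟩
  rw [← Finset.sum_erase_add _ _ hmem0, ← Finset.sum_erase_add _ _ hmem1]
  congr 1
  · rw [Finset.erase_right_comm (a := n₀) (b := n₁)]
    apply Finset.sum_congr rfl
    intro v hv
    rw [Finset.mem_erase, Finset.mem_erase] at hv
    obtain ⟨hv0, hv1, -⟩ := hv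
    rw [parent_root_swap hadj v hv0 hv1, hφA v, hφB v, hsub_eq v hv0 hv1]
  · rw [parent_of_adj hadj, parent_of_adj hadj.symm, hopp, abs_neg, hMsymm]
end

section
/- Let T be a finite undirected tree with symmetric edge costs and ρ > 0, and suppose p, q : V → ℝ satisfy Σ_v p(v) = Σ_v q(v). Then tEMD^ρ_r(p,q) is independent of the choice of root r: for any two vertices r₀, r₁, tEMD^ρ_{r₀}(p,q) = tEMD^ρ_{r₁}(p,q). -/
open SimpleGraph Finset

variable {V : Type} [Fintype V] [DecidableEq V]

set_option linter.unusedSectionVars false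
set_option linter.unusedVariables false

lemma isPath_concat {G : SimpleGraph V} {u v w : V} {p : G.Walk u v} (hp : p.IsPath)
    (h : G.Adj v w) (hw : w ∉ p.support) : (p.concat h).IsPath := by
  rw [SimpleGraph.Walk.isPath_def, SimpleGraph.Walk.support_concat,
    List.nodup_append]
  exact ⟨hp.support_nodup, List.nodup_singleton w,
    fun a ha b hb => by rw [List.mem_singleton] at hb; subst hb; rintro rfl; exact hw ha⟩

namespace TEMDAux

variable (G : SimpleGraph V) (hG : G.IsTree)

/-- The unique path between two vertices. -/
noncomputable def UP (u x : V) : G.Walk u x := (hG.existsUnique_path u x).choose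

lemma UP_isPath (u x : V) : (UP G hG u x).IsPath := (hG.existsUnique_path u x).choose_spec.1

lemma UP_unique {u x : V} (p : G.Walk u x) (hp : p.IsPath) : p = UP G hG u x :=
  (hG.existsUnique_path u x).choose_spec.2 p hp

lemma treeParent_def (r v : V) : treeParent G hG r v = (UP G hG v r).getVert 1 := rfl

lemma UP_self (u : V) : UP G hG u u = SimpleGraph.Walk.nil :=
  (UP_unique G hG _ (SimpleGraph.Walk.IsPath.nil)).symm

lemma UP_support_subset {u x : V} (p : G.Walk u x) :
    (UP G hG u x).support ⊆ p.support := by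
  rw [← UP_unique G hG p.bypass p.bypass_isPath]
  exact p.support_bypass_subset

lemma treeParent_self (r : V) : treeParent G hG r r = r := by
  rw [treeParent_def, UP_self]
  exact SimpleGraph.Walk.getVert_of_length_le _ (by simp)

lemma UP_cons {r v : V} (hv : v ≠ r) :
    ∃ h : G.Adj v (treeParent G hG r v),
      UP G hG v r = SimpleGraph.Walk.cons h (UP G hG (treeParent G hG r v) r) := by
  have hnil : ¬ (UP G hG v r).Nil := SimpleGraph.Walk.not_nil_of_ne hv
  have hadj := SimpleGraph.Walk.adj_snd hnil
  refine ⟨hadj, ?_⟩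
  have htail : (UP G hG v r).tail = UP G hG ((UP G hG v r).getVert 1) r :=
    UP_unique G hG _ ((UP_isPath G hG v r).tail)
  conv_lhs => rw [← (UP G hG v r).cons_tail_eq hnil]
  rw [htail]
  rfl

lemma adj_treeParent {r v : V} (hv : v ≠ r) : G.Adj v (treeParent G hG r v) :=
  (UP_cons G hG hv).choose

lemma length_treeParent {r v : V} (hv : v ≠ r) :
    (UP G hG (treeParent G hG r v) r).length + 1 = (UP G hG v r).length := by
  obtain ⟨h, hc⟩ := UP_cons G hG hv
  rw [hc, SimpleGraph.Walk.length_cons]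

lemma UP_dropUntil {u x r : V} (h : x ∈ (UP G hG u r).support) :
    (UP G hG u r).dropUntil x h = UP G hG x r :=
  UP_unique G hG _ ((UP_isPath G hG u r).dropUntil h)

lemma length_le_of_mem {u x r : V} (h : x ∈ (UP G hG u r).support) :
    (UP G hG x r).length ≤ (UP G hG u r).length := by
  rw [← UP_dropUntil G hG h]
  exact SimpleGraph.Walk.length_dropUntil_le _ h

lemma support_subset_of_mem {u x r : V} (h : x ∈ (UP G hG u r).support) :
    (UP G hG x r).support ⊆ (UP G hG u r).support := by
  rw [← UP_dropUntil G hG h]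
  exact SimpleGraph.Walk.support_dropUntil_subset _ h

lemma length_lt_of_mem {u x r : V} (h : x ∈ (UP G hG u r).support) (hxu : x ≠ u) :
    (UP G hG x r).length < (UP G hG u r).length := by
  have hspec := (UP G hG u r).take_spec h
  have hlen : ((UP G hG u r).takeUntil x h).length + ((UP G hG u r).dropUntil x h).length
      = (UP G hG u r).length := by
    rw [← SimpleGraph.Walk.length_append, hspec]
  rw [UP_dropUntil G hG h] at hlen
  have : ((UP G hG u r).takeUntil x h).length ≠ 0 := by
    intro h0
    have := SimpleGraph.Walk.nil_iff_length_eq.2 h0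
    exact hxu this.eq.symm
  omega

lemma mem_support_iff {r u : V} (hu : u ≠ r) (x : V) :
    x ∈ (UP G hG u r).support ↔ x = u ∨ x ∈ (UP G hG (treeParent G hG r u) r).support := by
  obtain ⟨h, hc⟩ := UP_cons G hG hu
  rw [hc, SimpleGraph.Walk.support_cons, List.mem_cons]

/-- Descendants of `v` for the rooting at `r` (including `v`). -/
noncomputable def desc (r v : V) : Finset V :=
  Finset.univ.filter fun u => v ∈ (UP G hG u r).support

lemma mem_desc {r v u : V} : u ∈ desc G hG r v ↔ v ∈ (UP G hG u r).support := by
  simp [desc]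

lemma self_mem_desc (r v : V) : v ∈ desc G hG r v :=
  (mem_desc G hG).2 (SimpleGraph.Walk.start_mem_support _)

lemma child_spec {r v c : V} (hc : c ∈ treeChildren G hG r v) :
    c ≠ r ∧ treeParent G hG r c = v := by
  simpa [treeChildren] using hc

lemma length_child {r v c : V} (hc : c ∈ treeChildren G hG r v) :
    (UP G hG v r).length + 1 = (UP G hG c r).length := by
  obtain ⟨h1, h2⟩ := child_spec G hG hc
  have := length_treeParent G hG h1
  rwa [h2] at this

lemma not_mem_support_child {r v c x : V} (hc : c ∈ treeChildren G hG r v)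
    (hx : x ∈ (UP G hG v r).support) : c ∉ (UP G hG x r).support := by
  intro hmem
  have h1 := length_le_of_mem G hG hx
  have h2 := length_le_of_mem G hG hmem
  have h3 := length_child G hG hc
  omega

lemma desc_eq_insert_biUnion (r v : V) :
    desc G hG r v = insert v ((treeChildren G hG r v).biUnion (desc G hG r ·)) := by
  ext u
  simp only [Finset.mem_insert, Finset.mem_biUnion, mem_desc]
  constructor
  · intro hu
    by_cases huv : u = v
    · exact Or.inl huv
    · right
      -- strong induction on the length of the path from u to r
      have main : ∀ n (u : V), (UP G hG u r).length = n → v ∈ (UP G hG u r).support → u ≠ v →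
          ∃ c ∈ treeChildren G hG r v, v ∈ (UP G hG c r).support ∧ c ∈ (UP G hG u r).support := by
        intro n
        induction n using Nat.strong_induction_on with
        | _ n ih =>
          intro u hlen hu huv
          have hur : u ≠ r := by
            rintro rfl
            rw [UP_self] at hu
            simp only [SimpleGraph.Walk.support_nil, List.mem_singleton] at hu
            exact huv hu.symm
          by_cases hpar : treeParent G hG r u = v
          · refine ⟨u, ?_, hu, SimpleGraph.Walk.start_mem_support _⟩
            simp [treeChildren, hur, hpar]
          · have hv' : v ∈ (UP G hG (treeParent G hG r u) r).support := by
              rcases (mem_support_iff G hG hur v).1 hu with h | h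
              · exact absurd h.symm huv
              · exact h
            have hlt : (UP G hG (treeParent G hG r u) r).length < n := by
              have := length_treeParent G hG hur
              omega
            obtain ⟨c, hc1, hc2, hc3⟩ := ih _ hlt _ rfl hv' hpar
            refine ⟨c, hc1, hc2, ?_⟩
            rw [mem_support_iff G hG hur]
            exact Or.inr hc3
      obtain ⟨c, hc1, _, hc3⟩ := main _ u rfl hu huv
      exact ⟨c, hc1, hc3⟩
  · rintro (rfl | ⟨c, hc, hmem⟩)
    · exact SimpleGraph.Walk.start_mem_support _
    · -- v is on the path from c to r, which is inside the path from u to r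
      have h1 : v ∈ (UP G hG c r).support := by
        obtain ⟨hcr, hp⟩ := child_spec G hG hc
        obtain ⟨h, hcons⟩ := UP_cons G hG hcr
        rw [hcons, SimpleGraph.Walk.support_cons]
        refine List.mem_cons_of_mem _ ?_
        rw [hp]
        exact SimpleGraph.Walk.start_mem_support _
      exact support_subset_of_mem G hG hmem h1

lemma eq_of_mem_desc_children {r v c c' u : V} (hc : c ∈ treeChildren G hG r v)
    (hc' : c' ∈ treeChildren G hG r v) (h1 : u ∈ desc G hG r c) (h2 : u ∈ desc G hG r c') :
    c = c' := by
  rw [mem_desc] at h1 h2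
  have main : ∀ n (u : V), (UP G hG u r).length = n →
      c ∈ (UP G hG u r).support → c' ∈ (UP G hG u r).support → c = c' := by
    intro n
    induction n using Nat.strong_induction_on with
    | _ n ih =>
      intro u hlen h1 h2
      by_cases huc : u = c
      · subst huc
        by_cases h : c' = u
        · exact h.symm
        · obtain ⟨hur, hp⟩ := child_spec G hG hc
          have h2' : c' ∈ (UP G hG (treeParent G hG r u) r).support :=
            ((mem_support_iff G hG hur c').1 h2).resolve_left h
          rw [hp] at h2'
          have hle := length_le_of_mem G hG h2'
          have hlen' := length_child G hG hc'
          omega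
      by_cases huc' : u = c'
      · subst huc'
        obtain ⟨hur, hp⟩ := child_spec G hG hc'
        have h1' : c ∈ (UP G hG (treeParent G hG r u) r).support :=
          ((mem_support_iff G hG hur c).1 h1).resolve_left (fun h => absurd h.symm huc)
        rw [hp] at h1'
        have hle := length_le_of_mem G hG h1'
        have hlen' := length_child G hG hc
        omega
      · have hur : u ≠ r := by
          rintro rfl
          rw [UP_self] at h1
          simp only [SimpleGraph.Walk.support_nil, List.mem_singleton] at h1
          exact (child_spec G hG hc).1 h1
        have hlt : (UP G hG (treeParent G hG r u) r).length < n := by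
          have := length_treeParent G hG hur
          omega
        exact ih _ hlt _ rfl
          (((mem_support_iff G hG hur c).1 h1).resolve_left (fun h => absurd h.symm huc))
          (((mem_support_iff G hG hur c').1 h2).resolve_left (fun h => absurd h.symm huc'))
  exact main _ u rfl h1 h2

lemma sum_desc (r v : V) (f : V → ℝ) :
    ∑ u ∈ desc G hG r v, f u
      = f v + ∑ c ∈ treeChildren G hG r v, ∑ u ∈ desc G hG r c, f u := by
  rw [desc_eq_insert_biUnion]
  rw [Finset.sum_insert, Finset.sum_biUnion]
  · intro c hc c' hc' hne
    simp only [Function.onFun]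
    rw [Finset.disjoint_left]
    intro u hu hu'
    exact hne (eq_of_mem_desc_children G hG (by simpa using hc) (by simpa using hc') hu hu')
  · simp only [Finset.mem_biUnion, not_exists, not_and]
    intro c hc hv
    rw [mem_desc] at hv
    have h1 := length_le_of_mem G hG hv
    have h2 := length_child G hG hc
    omega

lemma flow_eq_sum_desc {r : V} {p q φ : V → ℝ} (hφ : IsFlow G hG r p q φ) (v : V) :
    φ v = ∑ u ∈ desc G hG r v, (p u - q u) := by
  have main : ∀ n (v : V), Fintype.card V ≤ (UP G hG v r).length + n →
      φ v = ∑ u ∈ desc G hG r v, (p u - q u) := by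
    intro n
    induction n with
    | zero =>
      intro v hv
      have := (UP_isPath G hG v r).length_lt
      omega
    | succ n ih =>
      intro v hv
      rw [hφ v, sum_desc]
      congr 1
      apply Finset.sum_congr rfl
      intro c hc
      apply ih
      have := length_child G hG hc
      omega
  refine main (Fintype.card V) v ?_
  omega

lemma UP_adj {v w : V} (h : G.Adj v w) :
    UP G hG v w = SimpleGraph.Walk.cons h SimpleGraph.Walk.nil := by
  refine (UP_unique G hG _ ?_).symm
  simp [SimpleGraph.Walk.cons_isPath_iff, h.ne]

lemma parent_of_not_mem {r v w : V} (h : G.Adj v w) (hv : v ∉ (UP G hG w r).support) :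
    treeParent G hG r v = w ∧ v ≠ r := by
  have hpath : (SimpleGraph.Walk.cons h (UP G hG w r)).IsPath :=
    (UP_isPath G hG w r).cons hv
  have heq := UP_unique G hG _ hpath
  constructor
  · rw [treeParent_def, ← heq, SimpleGraph.Walk.getVert_cons_succ, SimpleGraph.Walk.getVert_zero]
  · rintro rfl
    exact hv (SimpleGraph.Walk.end_mem_support _)

lemma not_both_mem {r v w : V} (hne : v ≠ w) (h1 : v ∈ (UP G hG w r).support)
    (h2 : w ∈ (UP G hG v r).support) : False := by
  have := length_lt_of_mem G hG h1 hne
  have := length_lt_of_mem G hG h2 (Ne.symm hne)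
  omega

lemma parent_dichotomy {r v w : V} (h : G.Adj v w) :
    (treeParent G hG r v = w ∧ v ≠ r) ∨ (treeParent G hG r w = v ∧ w ≠ r) := by
  by_cases hv : v ∈ (UP G hG w r).support
  · refine Or.inr (parent_of_not_mem G hG h.symm ?_)
    intro hw
    exact not_both_mem G hG h.ne hv hw
  · exact Or.inl (parent_of_not_mem G hG h hv)

lemma parent_flip_ne {r v w : V} (hv : v ≠ r) (hp : treeParent G hG r v = w) :
    treeParent G hG r w ≠ v := by
  intro hp'
  by_cases hw : w = r
  · subst hw
    rw [treeParent_self] at hp'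
    exact hv hp'.symm
  · have l1 := length_treeParent G hG hv
    have l2 := length_treeParent G hG hw
    rw [hp] at l1
    rw [hp'] at l2
    omega

/-- L1: membership of `v` in the path to the root equals membership in the path
to the parent of `v`. -/
lemma mem_UP_iff {r v : V} (hv : v ≠ r) (u : V) :
    v ∈ (UP G hG u r).support ↔ v ∈ (UP G hG u (treeParent G hG r v)).support := by
  set w := treeParent G hG r v with hw
  have hadj : G.Adj v w := adj_treeParent G hG hv
  obtain ⟨h', hcons⟩ := UP_cons G hG hv
  constructor
  · intro hm
    set t := (UP G hG u r).takeUntil v hm with ht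
    have htp : t.IsPath := (UP_isPath G hG u r).takeUntil hm
    have hwt : w ∉ t.support := by
      have hnodup : ((UP G hG u r).support).Nodup := (UP_isPath G hG u r).support_nodup
      have hsplit : (UP G hG u r).support
          = t.support ++ ((UP G hG u r).dropUntil v hm).support.tail := by
        conv_lhs => rw [← (UP G hG u r).take_spec hm]
        rw [SimpleGraph.Walk.support_append]
      rw [hsplit] at hnodup
      have hw2 : w ∈ ((UP G hG u r).dropUntil v hm).support.tail := by
        rw [UP_dropUntil G hG hm, hcons, SimpleGraph.Walk.support_cons]
        exact SimpleGraph.Walk.start_mem_support _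
      exact fun hw1 => (List.disjoint_of_nodup_append hnodup) hw1 hw2
    have hpath := isPath_concat htp hadj hwt
    rw [← UP_unique G hG _ hpath, SimpleGraph.Walk.support_concat]
    exact List.mem_append_left _ (SimpleGraph.Walk.end_mem_support _)
  · intro hm
    by_contra hnm
    have hsub := UP_support_subset G hG ((UP G hG u r).append (UP G hG w r).reverse)
    have hv2 := hsub hm
    rw [SimpleGraph.Walk.mem_support_append_iff] at hv2
    rcases hv2 with hv2 | hv2
    · exact hnm hv2
    · rw [SimpleGraph.Walk.support_reverse, List.mem_reverse] at hv2
      have : ¬ v ∈ (UP G hG w r).support := by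
        have := UP_isPath G hG v r
        rw [hcons, SimpleGraph.Walk.cons_isPath_iff] at this
        exact this.2
      exact this hv2

/-- L2: for adjacent `v w`, `v` is on the path from `u` to `w` iff `w` is not on
the path from `u` to `v`. -/
lemma mem_UP_iff_not_mem {v w : V} (hadj : G.Adj v w) (u : V) :
    v ∈ (UP G hG u w).support ↔ w ∉ (UP G hG u v).support := by
  constructor
  · intro hm
    set t := (UP G hG u w).takeUntil v hm with ht
    have htp : t.IsPath := (UP_isPath G hG u w).takeUntil hm
    have hwt : w ∉ t.support := by
      have hnodup : ((UP G hG u w).support).Nodup := (UP_isPath G hG u w).support_nodup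
      have hsplit : (UP G hG u w).support
          = t.support ++ ((UP G hG u w).dropUntil v hm).support.tail := by
        conv_lhs => rw [← (UP G hG u w).take_spec hm]
        rw [SimpleGraph.Walk.support_append]
      rw [hsplit] at hnodup
      have hw2 : w ∈ ((UP G hG u w).dropUntil v hm).support.tail := by
        rw [UP_dropUntil G hG hm, UP_adj G hG hadj]
        simp
      exact fun hw1 => (List.disjoint_of_nodup_append hnodup) hw1 hw2
    rw [← UP_unique G hG t htp]
    exact hwt
  · intro hnm
    have hpath := isPath_concat (UP_isPath G hG u v) hadj hnm
    rw [← UP_unique G hG _ hpath, SimpleGraph.Walk.support_concat]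
    exact List.mem_append_left _ (SimpleGraph.Walk.end_mem_support _)

/-- The map sending a non-root vertex (for root `r`) to the endpoint of the edge
`{v, parent v}` that is the child for the root `r'`. -/
noncomputable def sigma (r r' v : V) : V :=
  if treeParent G hG r' v = treeParent G hG r v then v else treeParent G hG r v

lemma sigma_flip {r r' v : V} (hv : v ≠ r)
    (h : treeParent G hG r' v ≠ treeParent G hG r v) :
    treeParent G hG r' (treeParent G hG r v) = v ∧ treeParent G hG r v ≠ r' := by
  have hadj : G.Adj v (treeParent G hG r v) := adj_treeParent G hG hv
  rcases parent_dichotomy G hG (r := r') hadj with ⟨h1, _⟩ | h1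
  · exact absurd h1 h
  · exact h1

lemma sigma_ne {r r' v : V} (hv : v ≠ r) : sigma G hG r r' v ≠ r' := by
  unfold sigma
  by_cases h : treeParent G hG r' v = treeParent G hG r v
  · rw [if_pos h]
    rintro rfl
    rw [treeParent_self] at h
    exact (adj_treeParent G hG hv).ne (h ▸ rfl)
  · rw [if_neg h]
    exact (sigma_flip G hG hv h).2

lemma sigma_sigma {r r' v : V} (hv : v ≠ r) : sigma G hG r' r (sigma G hG r r' v) = v := by
  unfold sigma
  by_cases h : treeParent G hG r' v = treeParent G hG r v
  · rw [if_pos h, if_pos h.symm]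
  · rw [if_neg h]
    obtain ⟨h1, _⟩ := sigma_flip G hG hv h
    have h2 : treeParent G hG r (treeParent G hG r v) ≠ v := parent_flip_ne G hG hv rfl
    rw [if_neg (fun hh => h2 (hh.trans h1)), h1]

lemma desc_eq_of_parent_eq {r r' v : V} (hv : v ≠ r) (hv' : v ≠ r')
    (h : treeParent G hG r' v = treeParent G hG r v) :
    desc G hG r v = desc G hG r' v := by
  ext u
  rw [mem_desc, mem_desc, mem_UP_iff G hG hv u, mem_UP_iff G hG hv' u, h]

lemma desc_compl {r r' v : V} (hv : v ≠ r)
    (h : treeParent G hG r' v ≠ treeParent G hG r v) :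
    desc G hG r' (treeParent G hG r v) = Finset.univ \ desc G hG r v := by
  obtain ⟨hp', hw'⟩ := sigma_flip G hG hv h
  have hadj : G.Adj v (treeParent G hG r v) := adj_treeParent G hG hv
  ext u
  rw [Finset.mem_sdiff, mem_desc, mem_desc]
  rw [mem_UP_iff G hG hw' u, hp']
  rw [mem_UP_iff G hG hv u]
  rw [mem_UP_iff_not_mem G hG hadj u]
  simp only [Finset.mem_univ, true_and]
  tauto

end TEMDAux

open TEMDAux in
theorem tEMD_root_independent (G : SimpleGraph V) (hG : G.IsTree)
    (M : V → V → ℝ) (hMsymm : ∀ a b, M a b = M b a) (hMnonneg : ∀ a b, 0 ≤ M a b)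
    (ρ : ℝ) (hρ : 0 < ρ)
    (r₀ r₁ : V) (p q : V → ℝ)
    (hmass : ∑ v, p v = ∑ v, q v)
    (φ₀ φ₁ : V → ℝ)
    (h₀ : IsFlow G hG r₀ p q φ₀) (h₁ : IsFlow G hG r₁ p q φ₁) :
    tEMD G hG M ρ r₀ φ₀ = tEMD G hG M ρ r₁ φ₁ := by
  have htot : ∑ u, (p u - q u) = 0 := by
    rw [Finset.sum_sub_distrib, hmass, sub_self]
  unfold tEMD
  refine Finset.sum_nbij' (sigma G hG r₀ r₁) (sigma G hG r₁ r₀) ?_ ?_ ?_ ?_ ?_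
  · intro v hv
    exact Finset.mem_erase.2 ⟨sigma_ne G hG (Finset.mem_erase.1 hv).1, Finset.mem_univ _⟩
  · intro v hv
    exact Finset.mem_erase.2 ⟨sigma_ne G hG (Finset.mem_erase.1 hv).1, Finset.mem_univ _⟩
  · intro v hv
    exact sigma_sigma G hG (Finset.mem_erase.1 hv).1
  · intro v hv
    exact sigma_sigma G hG (Finset.mem_erase.1 hv).1
  · intro v hv
    have hv0 : v ≠ r₀ := (Finset.mem_erase.1 hv).1
    rw [flow_eq_sum_desc G hG h₀ v]
    unfold sigma
    by_cases h : treeParent G hG r₁ v = treeParent G hG r₀ v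
    · rw [if_pos h]
      have hv1 : v ≠ r₁ := by
        rintro rfl
        rw [treeParent_self] at h
        exact (adj_treeParent G hG hv0).ne (h ▸ rfl)
      rw [flow_eq_sum_desc G hG h₁ v, h,
        desc_eq_of_parent_eq G hG hv0 hv1 h]
    · rw [if_neg h]
      obtain ⟨hp', hw'⟩ := sigma_flip G hG hv0 h
      rw [flow_eq_sum_desc G hG h₁ _, hp', desc_compl G hG hv0 h]
      rw [Finset.sum_sdiff_eq_sub (Finset.subset_univ _), htot, zero_sub, abs_neg]
      rw [hMsymm]
end

section
/- Let T be a finite undirected tree, n₀ and n₁ adjacent vertices, and φ^A, φ^B the flows rooted at n₀ and n₁ respectively. Then for every vertex v other than n₀ and n₁, φ^A(v) = φ^B(v). -/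
open SimpleGraph Finset

variable {V : Type} [Fintype V] [DecidableEq V]

set_option linter.unusedSectionVars false

lemma treeParent_eq_of_isPath (G : SimpleGraph V) (hG : G.IsTree) {r v : V}
    (p : G.Walk v r) (hp : p.IsPath) : treeParent G hG r v = p.getVert 1 := by
  have h := (hG.existsUnique_path v r).choose_spec
  rw [treeParent, h.2 p hp]

lemma getVert_one_append {G : SimpleGraph V} {u v w : V} (p : G.Walk u v) (q : G.Walk v w)
    (h : u ≠ v) : (p.append q).getVert 1 = p.getVert 1 := by
  rw [SimpleGraph.Walk.getVert_append]
  rcases lt_or_ge 1 p.length with hl | hl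
  · simp [hl]
  · interval_cases hp : p.length
    · exact absurd ((SimpleGraph.Walk.nil_iff_length_eq.2 hp).eq) h
    · simp only [lt_irrefl, if_false]
      rw [show (1 : ℕ) - 1 = 0 from rfl, SimpleGraph.Walk.getVert_zero,
        ← hp, SimpleGraph.Walk.getVert_length]

lemma treeParent_eq_treeParent (G : SimpleGraph V) (hG : G.IsTree) {n₀ n₁ v : V}
    (hadj : G.Adj n₀ n₁) (h0 : v ≠ n₀) (h1 : v ≠ n₁) :
    treeParent G hG n₀ v = treeParent G hG n₁ v := by
  obtain ⟨hP, -⟩ := (hG.existsUnique_path v n₀).choose_spec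
  set P := (hG.existsUnique_path v n₀).choose with hPdef
  have hpar0 : treeParent G hG n₀ v = P.getVert 1 := rfl
  by_cases hmem : n₁ ∈ P.support
  · have h1' : treeParent G hG n₁ v = (P.takeUntil n₁ hmem).getVert 1 :=
      treeParent_eq_of_isPath G hG _ (hP.takeUntil hmem)
    have key := getVert_one_append (P.takeUntil n₁ hmem) (P.dropUntil n₁ hmem) h1
    rw [P.take_spec hmem] at key
    rw [hpar0, h1', key]
  · have hQ : (P.concat hadj).IsPath := by
      rw [SimpleGraph.Walk.isPath_def, SimpleGraph.Walk.support_concat,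
        List.nodup_append]
      exact ⟨hP.support_nodup, List.nodup_singleton _,
        fun a ha b hb hab => hmem (by simp at hb; rw [← hb, ← hab]; exact ha)⟩
    rw [treeParent_eq_of_isPath G hG _ hQ, SimpleGraph.Walk.concat_eq_append,
      getVert_one_append _ _ h0, hpar0]

lemma treeParent_adjacent_root (G : SimpleGraph V) (hG : G.IsTree) {n₀ n₁ : V}
    (hadj : G.Adj n₀ n₁) : treeParent G hG n₀ n₁ = n₀ := by
  have hp : (SimpleGraph.Walk.cons hadj.symm SimpleGraph.Walk.nil).IsPath := by
    simp [SimpleGraph.Walk.isPath_def, hadj.ne']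
  rw [treeParent_eq_of_isPath G hG _ hp]
  rfl

lemma length_choose (G : SimpleGraph V) (hG : G.IsTree) (v r : V) :
    (hG.existsUnique_path v r).choose.length = G.dist v r := by
  obtain ⟨hP, hu⟩ := (hG.existsUnique_path v r).choose_spec
  obtain ⟨q, hq, hql⟩ := (hG.isConnected.exists_path_of_dist v r)
  rw [← hu q hq]; exact hql

lemma dist_lt_of_parent (G : SimpleGraph V) (hG : G.IsTree) {r c : V} (hc : c ≠ r) :
    G.dist (treeParent G hG r c) r < G.dist c r := by
  obtain ⟨hP, -⟩ := (hG.existsUnique_path c r).choose_spec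
  set P := (hG.existsUnique_path c r).choose with hPdef
  have hnil : ¬ P.Nil := SimpleGraph.Walk.not_nil_of_ne hc
  have htail : G.dist (treeParent G hG r c) r ≤ P.tail.length := SimpleGraph.dist_le P.tail
  have := SimpleGraph.Walk.length_tail_add_one hnil
  have hlen : P.length = G.dist c r := length_choose G hG c r
  omega

lemma treeChildren_eq (G : SimpleGraph V) (hG : G.IsTree) {n₀ n₁ v : V}
    (hadj : G.Adj n₀ n₁) (h0 : v ≠ n₀) (h1 : v ≠ n₁) :
    treeChildren G hG n₀ v = treeChildren G hG n₁ v := by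
  ext c
  simp only [treeChildren, mem_filter, mem_univ, true_and]
  constructor
  · rintro ⟨hc0, hpar⟩
    have hc1 : c ≠ n₁ := by
      rintro rfl
      rw [treeParent_adjacent_root G hG hadj] at hpar
      exact h0 hpar.symm
    exact ⟨hc1, by rw [← treeParent_eq_treeParent G hG hadj hc0 hc1, hpar]⟩
  · rintro ⟨hc1, hpar⟩
    have hc0 : c ≠ n₀ := by
      rintro rfl
      rw [treeParent_adjacent_root G hG hadj.symm] at hpar
      exact h1 hpar.symm
    exact ⟨hc0, by rw [treeParent_eq_treeParent G hG hadj hc0 hc1, hpar]⟩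

theorem flow_eq_away_from_roots (G : SimpleGraph V) (hG : G.IsTree)
    (n₀ n₁ : V) (hadj : G.Adj n₀ n₁) (p q : V → ℝ)
    (φA φB : V → ℝ)
    (hA : IsFlow G hG n₀ p q φA) (hB : IsFlow G hG n₁ p q φB) :
    ∀ v, v ≠ n₀ → v ≠ n₁ → φA v = φB v := by
  have hdist_lt : ∀ w : V, G.dist w n₀ < Fintype.card V := by
    intro w
    have := length_choose G hG w n₀
    have hP := (hG.existsUnique_path w n₀).choose_spec.1
    have := hP.length_lt
    omega
  suffices key : ∀ k : ℕ, ∀ v : V, v ≠ n₀ → v ≠ n₁ →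
      Fintype.card V - G.dist v n₀ ≤ k → φA v = φB v by
    intro v h0 h1
    exact key (Fintype.card V) v h0 h1 (Nat.sub_le _ _)
  intro k
  induction k with
  | zero =>
    intro v h0 h1 hle
    have := hdist_lt v
    omega
  | succ k ih =>
    intro v h0 h1 hle
    rw [hA v, hB v, ← treeChildren_eq G hG hadj h0 h1]
    congr 1
    apply Finset.sum_congr rfl
    intro c hc
    simp only [treeChildren, mem_filter, mem_univ, true_and] at hc
    obtain ⟨hc0, hpar⟩ := hc
    have hc1 : c ≠ n₁ := by
      rintro rfl
      rw [treeParent_adjacent_root G hG hadj] at hpar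
      exact h0 hpar.symm
    have hd : G.dist v n₀ < G.dist c n₀ := hpar ▸ dist_lt_of_parent G hG hc0
    have := hdist_lt c
    exact ih c hc0 hc1 (by omega)
end
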